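/- Let Q_n, R_n ∈ ℤ[x] satisfy Q_n = x²Q_{n−1} + (x + 3x²)R_{n−1} − 2x⁴R_{n−2} − 2x³R_{n−3} for n ≥ 3 and R_n = xQ_{n−1} + xR_{n−1} + (2x² − 2x³)R_{n−2} for n ≥ 2. Then for n ≥ 4, R_n satisfies the fourth-order recurrence R_n − (x + x²)R_{n−1} − 3x²R_{n−2} + 2x⁴R_{n−3} + 2x⁴R_{n−4} = 0. -/
import Mathlib


namespace AF

variable {V : Type*}

/-- `M` is (the edge set of) a perfect matching of `G`. -/
def IsPM (G : SimpleGraph V) (M : Set (Sym2 V)) : Prop :=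
  M ⊆ G.edgeSet ∧ ∀ v : V, ∃! e, e ∈ M ∧ v ∈ e

/-- `S` is an anti-forcing set of the perfect matching `M`:
`S ⊆ E(G) \ M` and `G - S` has `M` as its unique perfect matching. -/
def IsAntiforcing (G : SimpleGraph V) (M S : Set (Sym2 V)) : Prop :=
  S ⊆ G.edgeSet \ M ∧ IsPM (G.deleteEdges S) M ∧
    ∀ N, IsPM (G.deleteEdges S) N → N = M

/-- The anti-forcing number `af(G,M)`. -/
noncomputable def af (G : SimpleGraph V) (M : Set (Sym2 V)) : ℕ :=
  sInf {n | ∃ S : Set (Sym2 V), S.Finite ∧ S.ncard = n ∧ IsAntiforcing G M S}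

/-- The anti-forcing polynomial `Af(G,x) = ∑_M x^{af(G,M)}`. -/
noncomputable def AfPoly (G : SimpleGraph V) : Polynomial ℤ :=
  ∑ᶠ M ∈ {M : Set (Sym2 V) | IsPM G M}, (Polynomial.X : Polynomial ℤ) ^ af G M

/-- The anti-forcing spectrum of `G`. -/
def Spectrum (G : SimpleGraph V) : Set ℕ :=
  {n | ∃ M, IsPM G M ∧ af G M = n}

/-- `c` is an `M`-alternating cycle: a cycle whose edges alternate
(cyclically) between `M` and its complement. -/
def IsAltCycle (G : SimpleGraph V) (M : Set (Sym2 V)) {v : V} (c : G.Walk v v) : Prop :=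
  c.IsCycle ∧ ∀ i : Fin c.edges.length,
    (c.edges.get i ∈ M ↔
      c.edges.get ⟨((i : ℕ) + 1) % c.edges.length, Nat.mod_lt _ i.pos⟩ ∉ M)

/-- A compatible `M`-alternating set, given as a family of edge sets of
`M`-alternating cycles which pairwise intersect only in edges of `M`. -/
def IsCompatibleAltSet (G : SimpleGraph V) (M : Set (Sym2 V))
    (𝒞 : Set (Set (Sym2 V))) : Prop :=
  (∀ C ∈ 𝒞, ∃ (v : V) (c : G.Walk v v), IsAltCycle G M c ∧ {e | e ∈ c.edges} = C) ∧
  (∀ C ∈ 𝒞, ∀ D ∈ 𝒞, C ≠ D → C ∩ D ⊆ M)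

/-- `c'(G,M)`: the maximum cardinality of a compatible `M`-alternating set. -/
noncomputable def cmax (G : SimpleGraph V) (M : Set (Sym2 V)) : ℕ :=
  sSup {n | ∃ 𝒞 : Set (Set (Sym2 V)), 𝒞.Finite ∧ 𝒞.ncard = n ∧ IsCompatibleAltSet G M 𝒞}

/-- The edge `e` of `G - S` is forced by `S`: it belongs to every
perfect matching of `G - S`. -/
def ForcedBy (G : SimpleGraph V) (S : Set (Sym2 V)) (e : Sym2 V) : Prop :=
  e ∈ (G.deleteEdges S).edgeSet ∧ ∀ N, IsPM (G.deleteEdges S) N → e ∈ N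

/-- The edge `e` of `G - S` is anti-forced by `S`: it belongs to no
perfect matching of `G - S`. -/
def AntiForcedBy (G : SimpleGraph V) (S : Set (Sym2 V)) (e : Sym2 V) : Prop :=
  e ∈ (G.deleteEdges S).edgeSet ∧ ∀ N, IsPM (G.deleteEdges S) N → e ∉ N

/-- The vertices of `G ⊖ S`: delete the endpoints of every forced edge. -/
def ominusVerts (G : SimpleGraph V) (S : Set (Sym2 V)) : Set V :=
  {v | ¬ ∃ e, ForcedBy G S e ∧ v ∈ e}

/-- The graph `G ⊖ S`: from `G - S` delete all anti-forced edges and the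
endpoints of all forced edges. -/
def ominus (G : SimpleGraph V) (S : Set (Sym2 V)) :
    SimpleGraph ↥(ominusVerts G S) :=
  (G.deleteEdges (S ∪ {e | AntiForcedBy G S e})).induce (ominusVerts G S)

/-- Restriction of an edge set of `G` to a graph on a subtype of `V`. -/
def restrictEdges (W : Set V) (M : Set (Sym2 V)) : Set (Sym2 ↥W) :=
  {e | Sym2.map (Subtype.val) e ∈ M}

/-- Positions of hexagons, in the "brick wall" model of the hexagonal lattice:
vertices are `ℤ × ℤ`; the hexagon at position `p` (with `p.1 + p.2` even) has
vertex set `{p, p+(1,0), p+(2,0), p+(0,1), p+(1,1), p+(2,1)}`. -/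
abbrev HexPos := ℤ × ℤ

def hexVerts (p : HexPos) : Set (ℤ × ℤ) :=
  {p, p + (1,0), p + (2,0), p + (0,1), p + (1,1), p + (2,1)}

def hexEdges (p : HexPos) : Set (Sym2 (ℤ × ℤ)) :=
  {s(p, p + (1,0)), s(p + (1,0), p + (2,0)), s(p + (0,1), p + (1,1)),
   s(p + (1,1), p + (2,1)), s(p, p + (0,1)), s(p + (2,0), p + (2,1))}

/-- The vertex set used by a set `H` of hexagons. -/
def hexVertexSet (H : Set HexPos) : Set (ℤ × ℤ) := ⋃ p ∈ H, hexVerts p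

/-- The hexagonal system determined by a set `H` of hexagon positions,
as a graph on its own vertex set. -/
def hexSystemGraph (H : Set HexPos) : SimpleGraph ↥(hexVertexSet H) :=
  (SimpleGraph.fromEdgeSet (⋃ p ∈ H, hexEdges p)).induce (hexVertexSet H)

/-- Two hexagon positions sharing an edge. -/
def HexAdj (p q : HexPos) : Prop :=
  q - p ∈ ({(2,0), (-2,0), (1,1), (-1,-1), (1,-1), (-1,1)} : Set HexPos)

/-- The dual (inner) graph of a set of hexagons. -/
def dualGraph (H : Set HexPos) : SimpleGraph ↥H :=
  SimpleGraph.fromRel fun a b => HexAdj a.1 b.1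

/-- `H` is a catacondensed hexagonal system: finitely many hexagons on the
even lattice positions whose dual graph is a (nonempty) tree. -/
def IsCatacondensed (H : Set HexPos) : Prop :=
  H.Finite ∧ H.Nonempty ∧ (∀ p ∈ H, Even (p.1 + p.2)) ∧
    (dualGraph H).Connected ∧ (dualGraph H).IsAcyclic

/-- The three axis directions of linear chains. -/
def hexDirs : Set HexPos := {(2,0), (1,1), (1,-1)}

/-- All six directions in which a linear segment may proceed. -/
def hexDirsAll : Set HexPos := {(2,0), (-2,0), (1,1), (-1,-1), (1,-1), (-1,1)}

/-- The vertical edge of the hexagon at `p` associated to the linear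
direction `d ∈ hexDirs`: the edge of that hexagon crossed by the line of
centers, on the side of `-d`.  For a linear chain `p, p+d, …, p+n•d` the
vertical edges are exactly `vEdge d (p + k•d)` for `0 ≤ k ≤ n+1`. -/
def vEdge (d p : HexPos) : Sym2 (ℤ × ℤ) :=
  if d = (2,0) then s(p, p + (0,1))
  else if d = (1,1) then s(p, p + (1,0))
  else s(p + (0,1), p + (1,1))

/-- Starting positions of the segments of a hexagonal chain with segment
lengths `L`, segment directions `d`, and initial hexagon `p0`; consecutive
segments share their kink hexagon. -/
def segStart (d : ℕ → HexPos) (p0 : HexPos) (L : List ℕ) : ℕ → HexPos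
  | 0 => p0
  | i + 1 => segStart d p0 L i + (L.getD i 1 - 1) • d i

/-- The set of hexagons of the hexagonal chain with segment lengths `L`. -/
def chainSet (d : ℕ → HexPos) (p0 : HexPos) (L : List ℕ) : Set HexPos :=
  {q | ∃ i < L.length, ∃ k < L.getD i 0, q = segStart d p0 L i + k • d i}

/-- Replace the last entry `m` of a list by `m - 1`. -/
def decLast (L : List ℕ) : List ℕ :=
  L.dropLast ++ (L.getLast?.elim [] fun m => [m - 1])

/-- The linear hexagonal chain with `n` hexagons. -/
def linChain (n : ℕ) : Set HexPos :=
  {q | ∃ k < n, q = ((2 * (k : ℤ), 0) : HexPos)}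


open Polynomial in
/-- eliminating `Q` from the coupled recurrences yields the
fourth-order recurrence for `R`. -/
theorem R_fourth_order_recurrence (Q R : ℕ → Polynomial ℤ)
    (hQ : ∀ n, 3 ≤ n →
      Q n = X ^ 2 * Q (n - 1) + (X + 3 * X ^ 2) * R (n - 1)
        - 2 * X ^ 4 * R (n - 2) - 2 * X ^ 3 * R (n - 3))
    (hR : ∀ n, 2 ≤ n →
      R n = X * Q (n - 1) + X * R (n - 1) + (2 * X ^ 2 - 2 * X ^ 3) * R (n - 2)) :
    ∀ n, 4 ≤ n →
      R n - (X + X ^ 2) * R (n - 1) - 3 * X ^ 2 * R (n - 2)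
        + 2 * X ^ 4 * R (n - 3) + 2 * X ^ 4 * R (n - 4) = 0 := by
  intro n hn
  obtain ⟨m, rfl⟩ : ∃ m, n = m + 4 := ⟨n - 4, by omega⟩
  have h1 := hR (m + 4) (by omega)
  have h2 := hQ (m + 3) (by omega)
  have h3 := hR (m + 3) (by omega)
  have e1 : m + 4 - 1 = m + 3 := by omega
  have e2 : m + 4 - 2 = m + 2 := by omega
  have e3 : m + 4 - 3 = m + 1 := by omega
  have e4 : m + 4 - 4 = m := by omega
  have f1 : m + 3 - 1 = m + 2 := by omega
  have f2 : m + 3 - 2 = m + 1 := by omega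
  have f3 : m + 3 - 3 = m := by omega
  rw [e1, e2] at h1
  rw [e1, e2, e3, e4]
  rw [f1, f2, f3] at h2
  rw [f1, f2] at h3
  linear_combination h1 + X * h2 - X ^ 2 * h3

end AF
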